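/- The function f(x) = ln(3 + (1 + x)·e^{−x}) is concave on the interval [0,1]. -/

import Mathlib

open Real Set

private lemma comp_aux {s t : Set ℝ} {f g : ℝ → ℝ} (hg : ConcaveOn ℝ t g)
    (hf : ConcaveOn ℝ s f) (hmap : ∀ x ∈ s, f x ∈ t) (hg' : MonotoneOn g t) :
    ConcaveOn ℝ s (g ∘ f) :=
  ⟨hf.1, fun x hx y hy _a _b ha hb hab =>
    (hg.2 (hmap x hx) (hmap y hy) ha hb hab).trans <|
      hg' (hg.1 (hmap x hx) (hmap y hy) ha hb hab)
        (hmap _ (hf.1 hx hy ha hb hab)) (hf.2 hx hy ha hb hab)⟩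

private lemma h2 (x : ℝ) : HasDerivAt (fun x : ℝ => Real.exp (-x)) (-Real.exp (-x)) x := by
  simpa [Function.comp_def] using (Real.hasDerivAt_exp (-x)).comp x (hasDerivAt_neg x)

private lemma inner_concave :
    ConcaveOn ℝ (Icc (0:ℝ) 1) (fun x : ℝ => 3 + (1 + x) * Real.exp (-x)) := by
  apply concaveOn_of_hasDerivWithinAt2_nonpos (f' := fun x => -x * Real.exp (-x))
    (f'' := fun x => (x - 1) * Real.exp (-x)) (convex_Icc 0 1)
  · fun_prop
  · intro x _
    have h1 : HasDerivAt (fun x : ℝ => (1 + x)) 1 x := by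
      simpa using (hasDerivAt_id x).const_add 1
    have : HasDerivAt (fun x : ℝ => 3 + (1 + x) * Real.exp (-x))
        (-x * Real.exp (-x)) x := by
      have := (h1.mul (h2 x)).const_add 3
      exact this.congr_deriv (by ring)
    exact this.hasDerivWithinAt
  · intro x _
    have : HasDerivAt (fun x : ℝ => -x * Real.exp (-x)) ((x - 1) * Real.exp (-x)) x := by
      have := (hasDerivAt_neg x).mul (h2 x)
      exact this.congr_deriv (by ring)
    exact this.hasDerivWithinAt
  · intro x hx
    rw [interior_Icc] at hx
    have := Real.exp_pos (-x)
    nlinarith [hx.2]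

/-- Appendix B.5: concavity of f(x) = ln(3 + (1+x)e^{−x}) on [0,1]. -/
theorem concave_adwords_convergence_function :
    ConcaveOn ℝ (Set.Icc (0 : ℝ) 1)
      (fun x : ℝ => Real.log (3 + (1 + x) * Real.exp (-x))) := by
  exact comp_aux strictConcaveOn_log_Ioi.concaveOn inner_concave
    (fun x hx => by
      have := Real.exp_pos (-x)
      have hx0 : (0:ℝ) ≤ x := hx.1
      simp only [mem_Ioi]
      nlinarith)
    Real.strictMonoOn_log.monotoneOn
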